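/- The data of an atomic family (orthonormal basis {ξ_{v,i}}, injections π_e : Λ_{s(e)} → Λ_{r(e)} with pairwise disjoint ranges for edges with common range vertex, unimodular scalars λ_{e,i}) defines a TCK family: the S_v are pairwise orthogonal projections, S_e* S_e = S_{s(e)}, and Σ_{e∈F} S_e S_e* ≤ S_v for every finite F ⊆ r^{-1}(v). -/

import Mathlib

structure DirectedGraph where
  V : Type
  E : Type
  src : E → V
  rng : E → V

namespace DirectedGraph

/-- Two edges are composable (as in `e₂ e₁`, `e₂` after `e₁`) when `s(e₂) = r(e₁)`. -/
def Composable (G : DirectedGraph) (a b : G.E) : Prop := G.src a = G.rng b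

/-- A list `[eₙ, …, e₁]` of edges is a path when consecutive edges are composable. -/
def IsPathList (G : DirectedGraph) (μ : List G.E) : Prop := List.Chain' G.Composable μ

/-- The path `μ` has source `v` (vacuous for the empty path). -/
def SrcIs (G : DirectedGraph) (μ : List G.E) (v : G.V) : Prop :=
  ∀ e ∈ μ.getLast?, G.src e = v

/-- The path `μ`, regarded as a path with source `v`, has range `w`. -/
def RngIs (G : DirectedGraph) (v : G.V) (μ : List G.E) (w : G.V) : Prop :=
  match μ with
  | [] => v = w
  | e :: _ => G.rng e = w

/-- `μ` is a path with source `v`. -/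
def IsPathAt (G : DirectedGraph) (v : G.V) (μ : List G.E) : Prop :=
  G.IsPathList μ ∧ G.SrcIs μ v

/-- `μ` is a cycle at `v` : a path with source and range `v`. -/
def IsCycleAt (G : DirectedGraph) (v : G.V) (μ : List G.E) : Prop :=
  G.IsPathAt v μ ∧ G.RngIs v μ v

end DirectedGraph

/-- The data of an atomic family — an orthonormal basis `{ξ i}`
of `H` indexed by pairwise disjoint sets `Λ v`, injections `π e : Λ (s e) → Λ (r e)`
with pairwise disjoint ranges over edges with a common range vertex, unimodular
scalars `lam e i`, with `Sv v` the projection onto `span {ξ i : i ∈ Λ v}` and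
`Se e ξ_i = lam e i • ξ_{π e i}` for `i ∈ Λ (s e)` (killing all other basis
vectors) — defines a TCK family: the `Sv v` are pairwise orthogonal projections,
`(Se e)* (Se e) = Sv (s e)`, and `∑_{e ∈ F} (Se e)(Se e)* ≤ Sv v` for every finite
`F ⊆ r⁻¹(v)`. -/
theorem stmt15 (G : DirectedGraph) {H : Type} [NormedAddCommGroup H]
    [InnerProductSpace ℂ H] [CompleteSpace H] {I : Type}
    (Λ : G.V → Set I) (hdisj : ∀ v w, v ≠ w → Disjoint (Λ v) (Λ w))
    (hcover : ∀ i : I, ∃ v, i ∈ Λ v)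
    (ξ : I → H) (hON : Orthonormal ℂ ξ)
    (htot : (Submodule.span ℂ (Set.range ξ)).topologicalClosure = ⊤)
    (π : G.E → I → I)
    (hπmap : ∀ e, ∀ i ∈ Λ (G.src e), π e i ∈ Λ (G.rng e))
    (hπinj : ∀ e, Set.InjOn (π e) (Λ (G.src e)))
    (hπdisj : ∀ e f, e ≠ f → G.rng e = G.rng f →
      Disjoint (π e '' Λ (G.src e)) (π f '' Λ (G.src f)))
    (lam : G.E → I → ℂ) (hlam : ∀ e i, ‖lam e i‖ = 1)
    (Sv : G.V → H →L[ℂ] H) (Se : G.E → H →L[ℂ] H)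
    (hSv_eq : ∀ v, ∀ i ∈ Λ v, Sv v (ξ i) = ξ i)
    (hSv_ne : ∀ v i, i ∉ Λ v → Sv v (ξ i) = 0)
    (hSe_eq : ∀ e, ∀ i ∈ Λ (G.src e), Se e (ξ i) = lam e i • ξ (π e i))
    (hSe_ne : ∀ e i, i ∉ Λ (G.src e) → Se e (ξ i) = 0) :
    (∀ v, IsSelfAdjoint (Sv v) ∧ Sv v * Sv v = Sv v) ∧
    (∀ v w, v ≠ w → Sv v * Sv w = 0) ∧
    (∀ e, ContinuousLinearMap.adjoint (Se e) * Se e = Sv (G.src e)) ∧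
    (∀ (v : G.V) (F : Finset G.E), (∀ e ∈ F, G.rng e = v) →
      ContinuousLinearMap.IsPositive
        (Sv v - ∑ e ∈ F, Se e * ContinuousLinearMap.adjoint (Se e))) := by
  classical
  open scoped InnerProductSpace in
  have hdense : Dense ((Submodule.span ℂ (Set.range ξ) : Submodule ℂ H) : Set H) :=
    Submodule.dense_iff_topologicalClosure_eq_top.mpr htot
  have hext : ∀ A B : H →L[ℂ] H, (∀ i, A (ξ i) = B (ξ i)) → A = B := by
    intro A B h
    refine ContinuousLinearMap.ext_on hdense ?_
    rintro x ⟨i, rfl⟩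
    exact h i
  have hvext : ∀ x y : H, (∀ i, ⟪ξ i, x⟫_ℂ = ⟪ξ i, y⟫_ℂ) → x = y := by
    intro x y h
    refine Dense.eq_of_inner_right ℂ hdense ?_
    intro v hv
    induction hv using Submodule.span_induction with
    | mem z hz => obtain ⟨i, rfl⟩ := hz; exact h i
    | zero => simp
    | add a b _ _ ha hb => simp [inner_add_left, ha, hb]
    | smul a z _ hz => simp [inner_smul_left, hz]
  have hinner : ∀ i j, ⟪ξ i, ξ j⟫_ℂ = if i = j then 1 else 0 := fun i j => by
    by_cases hij : i = j
    · simp [hij, inner_self_eq_norm_sq_to_K, hON.1 j]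
    · simp [hij, hON.2 hij]
  have hSvadj : ∀ v, ContinuousLinearMap.adjoint (Sv v) = Sv v := by
    intro v
    refine hext _ _ fun j => hvext _ _ fun k => ?_
    rw [ContinuousLinearMap.adjoint_inner_right]
    by_cases hk : k ∈ Λ v <;> by_cases hj : j ∈ Λ v
    · rw [hSv_eq v k hk, hSv_eq v j hj]
    · rw [hSv_eq v k hk, hSv_ne v j hj, inner_zero_right, hinner,
        if_neg (by rintro rfl; exact hj hk)]
    · rw [hSv_ne v k hk, hSv_eq v j hj, inner_zero_left, hinner,
        if_neg (by rintro rfl; exact hk hj)]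
    · rw [hSv_ne v k hk, hSv_ne v j hj, inner_zero_left, inner_zero_right]
  have hSv_sa : ∀ v, IsSelfAdjoint (Sv v) :=
    fun v => ContinuousLinearMap.isSelfAdjoint_iff'.mpr (hSvadj v)
  -- adjoint of Se on basis vectors
  have hSeadj_eq : ∀ e, ∀ i ∈ Λ (G.src e),
      ContinuousLinearMap.adjoint (Se e) (ξ (π e i)) = (starRingEnd ℂ) (lam e i) • ξ i := by
    intro e i hi
    refine hvext _ _ fun k => ?_
    rw [ContinuousLinearMap.adjoint_inner_right, inner_smul_right]
    by_cases hk : k ∈ Λ (G.src e)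
    · rw [hSe_eq e k hk, inner_smul_left, hinner, hinner]
      by_cases hki : k = i
      · subst hki; simp
      · rw [if_neg (fun h => hki ((hπinj e) hk hi h)), if_neg hki, mul_zero, mul_zero]
    · rw [hSe_ne e k hk, inner_zero_left, hinner, if_neg (fun h => hk (by rw [h]; exact hi)), mul_zero]
  have hSeadj_ne : ∀ e j, (∀ i ∈ Λ (G.src e), π e i ≠ j) →
      ContinuousLinearMap.adjoint (Se e) (ξ j) = 0 := by
    intro e j hj
    refine hvext _ _ fun k => ?_
    rw [ContinuousLinearMap.adjoint_inner_right, inner_zero_right]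
    by_cases hk : k ∈ Λ (G.src e)
    · rw [hSe_eq e k hk, inner_smul_left, hinner, if_neg (hj k hk), mul_zero]
    · rw [hSe_ne e k hk, inner_zero_left]
  have hlam1 : ∀ e i, (starRingEnd ℂ) (lam e i) * lam e i = 1 := by
    intro e i
    rw [RCLike.conj_mul, hlam e i]
    norm_num
  -- the range projections Se e * (Se e)†
  have hP_eq : ∀ e, ∀ i ∈ Λ (G.src e),
      (Se e * ContinuousLinearMap.adjoint (Se e)) (ξ (π e i)) = ξ (π e i) := by
    intro e i hi
    rw [ContinuousLinearMap.mul_apply, hSeadj_eq e i hi, map_smul, hSe_eq e i hi,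
      smul_smul, hlam1, one_smul]
  have hP_ne : ∀ e j, (∀ i ∈ Λ (G.src e), π e i ≠ j) →
      (Se e * ContinuousLinearMap.adjoint (Se e)) (ξ j) = 0 := by
    intro e j hj
    rw [ContinuousLinearMap.mul_apply, hSeadj_ne e j hj, map_zero]
  refine ⟨?_, ?_, ?_, ?_⟩
  · -- projections
    intro v
    refine ⟨hSv_sa v, hext _ _ fun j => ?_⟩
    by_cases hj : j ∈ Λ v
    · rw [ContinuousLinearMap.mul_apply, hSv_eq v j hj, hSv_eq v j hj]
    · rw [ContinuousLinearMap.mul_apply, hSv_ne v j hj, map_zero]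
  · -- mutual orthogonality
    intro v w hvw
    refine hext _ _ fun j => ?_
    by_cases hj : j ∈ Λ w
    · rw [ContinuousLinearMap.mul_apply, hSv_eq w j hj,
        hSv_ne v j (fun h => (hdisj v w hvw).ne_of_mem h hj rfl),
        ContinuousLinearMap.zero_apply]
    · rw [ContinuousLinearMap.mul_apply, hSv_ne w j hj, map_zero,
        ContinuousLinearMap.zero_apply]
  · -- (Se e)† (Se e) = Sv (src e)
    intro e
    refine hext _ _ fun j => ?_
    by_cases hj : j ∈ Λ (G.src e)
    · rw [ContinuousLinearMap.mul_apply, hSe_eq e j hj, map_smul,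
        hSeadj_eq e j hj, smul_smul, mul_comm, hlam1, one_smul, hSv_eq _ j hj]
    · rw [ContinuousLinearMap.mul_apply, hSe_ne e j hj, map_zero, hSv_ne _ j hj]
  · -- positivity
    intro v F hF
    set T : H →L[ℂ] H := Sv v - ∑ e ∈ F, Se e * ContinuousLinearMap.adjoint (Se e) with hT
    have hsum_sa : IsSelfAdjoint (∑ e ∈ F, Se e * ContinuousLinearMap.adjoint (Se e)) := by
      rw [IsSelfAdjoint, star_sum]
      refine Finset.sum_congr rfl fun e _ => ?_
      rw [← ContinuousLinearMap.star_eq_adjoint]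
      exact IsSelfAdjoint.mul_star_self (Se e)
    have hTsa : IsSelfAdjoint T := (hSv_sa v).sub hsum_sa
    have hT2 : ∀ j, T (ξ j) = ξ j ∨ T (ξ j) = 0 := by
      intro j
      have hTapp : T (ξ j) =
          Sv v (ξ j) - ∑ e ∈ F, (Se e * ContinuousLinearMap.adjoint (Se e)) (ξ j) := by
        rw [hT, ContinuousLinearMap.sub_apply, ContinuousLinearMap.sum_apply]
      by_cases hj : j ∈ Λ v
      · by_cases hexj : ∃ e ∈ F, ∃ i ∈ Λ (G.src e), π e i = j
        · obtain ⟨e₀, he₀, i₀, hi₀, hji⟩ := hexj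
          right
          have h0 : ∀ e ∈ F, e ≠ e₀ →
              (Se e * ContinuousLinearMap.adjoint (Se e)) (ξ j) = 0 := by
            intro e heF hee
            refine hP_ne e j fun i hi hij => ?_
            exact Set.disjoint_left.mp (hπdisj e e₀ hee ((hF e heF).trans (hF e₀ he₀).symm))
              ⟨i, hi, hij⟩ ⟨i₀, hi₀, hji⟩
          have hsum : ∑ e ∈ F, (Se e * ContinuousLinearMap.adjoint (Se e)) (ξ j) = ξ j := by
            rw [Finset.sum_eq_single_of_mem e₀ he₀ h0, ← hji]
            exact hP_eq e₀ i₀ hi₀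
          rw [hTapp, hsum, hSv_eq v j hj, sub_self]
        · left
          push_neg at hexj
          rw [hTapp, hSv_eq v j hj,
            Finset.sum_eq_zero (fun e heF => hP_ne e j (hexj e heF)), sub_zero]
      · right
        have hz : ∀ e ∈ F, (Se e * ContinuousLinearMap.adjoint (Se e)) (ξ j) = 0 := by
          intro e heF
          exact hP_ne e j fun i hi hij =>
            hj (by rw [← hij, ← hF e heF]; exact hπmap e i hi)
        rw [hTapp, hSv_ne v j hj, Finset.sum_eq_zero hz, sub_zero]
    have hTT : T * T = T := by
      refine hext _ _ fun j => ?_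
      rcases hT2 j with h | h
      · rw [ContinuousLinearMap.mul_apply, h, h]
      · rw [ContinuousLinearMap.mul_apply, h, map_zero]
    refine ⟨ContinuousLinearMap.isSelfAdjoint_iff_isSymmetric.mp hTsa, fun x => ?_⟩
    have hadj : ContinuousLinearMap.adjoint T = T :=
      ContinuousLinearMap.isSelfAdjoint_iff'.mp hTsa
    rw [ContinuousLinearMap.reApplyInnerSelf]
    have hx : ⟪T x, x⟫_ℂ = ⟪T x, T x⟫_ℂ := by
      conv_lhs => rw [← hTT]
      rw [ContinuousLinearMap.mul_apply]
      nth_rewrite 1 [← hadj]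
      rw [ContinuousLinearMap.adjoint_inner_left]
    rw [hx]
    exact inner_self_nonneg
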